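/- Let K be an algebraically closed field and let F ∈ K[x,y,z] be homogeneous of degree d ≥ 1. Suppose there is no nonzero linear form L ∈ K[x,y,z] such that every point of ℙ²(K) at which F vanishes is also a zero of L (i.e., the curve F = 0 is not supported on a single line). Then there exist four points P₁, P₂, P₃, P₄ ∈ ℙ²(K) with F(Pᵢ) = 0 for all i, such that no three of the Pᵢ are collinear (i.e., any three of them have linearly independent homogeneous coordinate vectors in K³). -/

import Mathlib

open MvPolynomial
open scoped Polynomial.Bivariate

set_option maxHeartbeats 2000000

noncomputable section CurveFrameAux

variable {K : Type*} [Field K]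

/-- 3×3 determinant of rows. -/
private def det3 (a b c : Fin 3 → K) : K := Matrix.det (Matrix.of ![a,b,c])

private lemma det3_expand (a b c : Fin 3 → K) :
    det3 a b c = a 0 * (b 1 * c 2) - a 0 * (b 2 * c 1) - a 1 * (b 0 * c 2)
      + a 1 * (b 2 * c 0) + a 2 * (b 0 * c 1) - a 2 * (b 1 * c 0) := by
  simp [det3, Matrix.det_fin_three]; ring

private lemma li_iff_det (a b c : Fin 3 → K) :
    LinearIndependent K ![a,b,c] ↔ det3 a b c ≠ 0 := by
  rw [show (![a,b,c] : Fin 3 → Fin 3 → K) = (Matrix.of ![a,b,c]).row from rfl,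
    Matrix.linearIndependent_rows_iff_isUnit, Matrix.isUnit_iff_isUnit_det, isUnit_iff_ne_zero]
  rfl

private lemma li_swap {a b c : Fin 3 → K} (h : LinearIndependent K ![a,b,c]) :
    LinearIndependent K ![b,a,c] := by
  rw [li_iff_det] at h ⊢
  rw [show det3 b a c = -det3 a b c by rw [det3_expand, det3_expand]; ring]
  simpa using h

private lemma li_rot {a b c : Fin 3 → K} (h : LinearIndependent K ![a,b,c]) :
    LinearIndependent K ![b,c,a] := by
  rw [li_iff_det] at h ⊢
  rw [show det3 b c a = det3 a b c by rw [det3_expand, det3_expand]; ring]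
  exact h

private lemma ne_zero_of_det3 {a b c : Fin 3 → K} (h : det3 a b c ≠ 0) : a ≠ 0 := by
  rintro rfl; apply h; rw [det3_expand]; simp

private lemma det3_cyc (a b c : Fin 3 → K) : det3 a b c = det3 c a b := by
  rw [det3_expand, det3_expand]; ring

private lemma det3_chart (A B C : Fin 3 → K) (s t : K) :
    det3 B C (A + s • B + t • C) = det3 A B C := by
  rw [det3_expand, det3_expand]
  simp only [Pi.add_apply, Pi.smul_apply, smul_eq_mul]
  ring

private lemma det3_lin2 (a b c u v : Fin 3 → K) (s t : K) :
    det3 a b (c + s • u + t • v) = det3 a b c + s * det3 a b u + t * det3 a b v := by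
  rw [det3_expand, det3_expand, det3_expand, det3_expand]
  simp only [Pi.add_apply, Pi.smul_apply, smul_eq_mul]
  ring

private lemma det3_lin1 (a b c v : Fin 3 → K) (t : K) :
    det3 a b (c + t • v) = det3 a b c + t * det3 a b v := by
  rw [det3_expand, det3_expand, det3_expand]
  simp only [Pi.add_apply, Pi.smul_apply, smul_eq_mul]
  ring

private lemma det3_self (a b : Fin 3 → K) : det3 a b a = 0 := by
  rw [det3_expand]; ring

private lemma det3_combo (a b : Fin 3 → K) (x1 y1 x2 y2 : K) :
    det3 (x1 • a + y1 • b) (x2 • a + y2 • b) a = 0 := by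
  rw [det3_expand]
  simp only [Pi.add_apply, Pi.smul_apply, smul_eq_mul]
  ring

private lemma det3_twoline (D E v : Fin 3 → K) (ta tb : K) :
    det3 (D + ta • E) (D + tb • E) v = (tb - ta) * det3 D E v := by
  rw [det3_expand, det3_expand]
  simp only [Pi.add_apply, Pi.smul_apply, smul_eq_mul]
  ring

private lemma li_pair_of_li {a b c : Fin 3 → K} (h : LinearIndependent K ![a,b,c]) :
    LinearIndependent K ![a,b] := by
  have : ![a,b] = ![a,b,c] ∘ (fun i : Fin 2 => i.castSucc) := by
    funext i; fin_cases i <;> rfl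
  rw [this]
  exact h.comp _ (Fin.castSucc_injective 2)

private lemma range_pair (a b : Fin 3 → K) : Set.range ![a,b] = {a, b} := by
  rw [Matrix.range_cons, Matrix.range_cons_empty]; rfl

private lemma snoc_eq (a b v : Fin 3 → K) : ![a,b,v] = Fin.snoc ![a,b] v := by
  funext i; fin_cases i <;> simp [Fin.snoc] <;> rfl

private lemma li_snoc {a b v : Fin 3 → K} (hab : LinearIndependent K ![a,b])
    (hv : v ∉ Submodule.span K {a, b}) : LinearIndependent K ![a,b,v] := by
  rw [snoc_eq, linearIndependent_fin_snoc]
  exact ⟨hab, by rwa [range_pair]⟩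

private lemma mem_span_of_det3 {a b v : Fin 3 → K} (hab : LinearIndependent K ![a,b])
    (h : det3 a b v = 0) : v ∈ Submodule.span K {a, b} := by
  by_contra hv
  exact (li_iff_det a b v).mp (li_snoc hab hv) h

private lemma exists_extend {a b : Fin 3 → K} (hab : LinearIndependent K ![a,b]) :
    ∃ A, LinearIndependent K ![A,a,b] := by
  have hne : Submodule.span K {a, b} ≠ ⊤ := by
    intro htop
    have hsp : ⊤ ≤ Submodule.span K (Set.range ![a,b]) := by
      rw [range_pair, htop]
    let B := Module.Basis.mk hab hsp
    have h2 := Module.finrank_eq_card_basis B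
    rw [Module.finrank_fin_fun K] at h2
    simp at h2
  obtain ⟨A, hA⟩ : ∃ A, A ∉ Submodule.span K {a, b} := by
    by_contra h; push_neg at h
    exact hne (Submodule.eq_top_iff'.mpr h)
  exact ⟨A, li_rot (li_rot (li_snoc hab hA))⟩

private def lform (c : Fin 3 → K) : MvPolynomial (Fin 3) K := ∑ i, MvPolynomial.C (c i) * X i

private lemma eval_lform (c v : Fin 3 → K) : eval v (lform c) = ∑ i, c i * v i := by
  simp [lform]

private lemma lform_homog (c : Fin 3 → K) : (lform c).IsHomogeneous 1 := by
  apply MvPolynomial.IsHomogeneous.sum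
  intro i _
  exact (isHomogeneous_X K i).C_mul (c i)

private lemma lform_ne_zero {c : Fin 3 → K} (hc : c ≠ 0) : lform c ≠ 0 := by
  intro h0
  apply hc
  funext j
  have := congrArg (eval (Pi.single j 1)) h0
  rw [eval_lform] at this
  simp only [map_zero] at this
  rw [Fin.sum_univ_three] at this
  fin_cases j <;> simpa [Pi.single_apply] using this

private def crossVec (a b : Fin 3 → K) : Fin 3 → K :=
  ![a 1 * b 2 - a 2 * b 1, a 2 * b 0 - a 0 * b 2, a 0 * b 1 - a 1 * b 0]

private lemma dot_cross (a b v : Fin 3 → K) : ∑ i, crossVec a b i * v i = det3 a b v := by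
  rw [Fin.sum_univ_three, det3_expand]
  simp [crossVec]; ring

private lemma crossVec_ne_zero {a b : Fin 3 → K} (hab : LinearIndependent K ![a,b]) :
    crossVec a b ≠ 0 := by
  obtain ⟨A, hA⟩ := exists_extend hab
  have hd : det3 A a b ≠ 0 := (li_iff_det _ _ _).mp hA
  intro h0
  apply hd
  have h1 : det3 a b A = 0 := by rw [← dot_cross, h0]; simp
  rw [det3_expand] at h1 ⊢; linear_combination h1

private lemma chart_ne_zero {A B C : Fin 3 → K} (hABC : LinearIndependent K ![A,B,C])
    (s t : K) : A + s • B + t • C ≠ 0 := by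
  intro h0
  have h3 := Fintype.linearIndependent_iff.mp hABC
  have := h3 ![1, s, t] (by rw [Fin.sum_univ_three]; simpa using h0) 0
  simp at this

private lemma li_pair_chart {A B C : Fin 3 → K} (hABC : LinearIndependent K ![A,B,C])
    {p q : K × K} (hpq : p ≠ q) :
    LinearIndependent K ![A + p.1 • B + p.2 • C, A + q.1 • B + q.2 • C] := by
  have h3 := Fintype.linearIndependent_iff.mp hABC
  rw [linearIndependent_fin2]
  constructor
  · exact chart_ne_zero hABC q.1 q.2
  · intro x hx
    simp only [Matrix.cons_val_zero, Matrix.cons_val_one, Matrix.head_cons] at hx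
    have key : (1-x) • A + (p.1 - x*q.1) • B + (p.2 - x*q.2) • C
        = (A + p.1 • B + p.2 • C) - x • (A + q.1 • B + q.2 • C) := by module
    rw [← hx, sub_self] at key
    have hall := h3 ![1-x, p.1 - x*q.1, p.2 - x*q.2] (by
      rw [Fin.sum_univ_three]; simpa using key)
    have h0 := hall 0
    have h1 := hall 1
    have h2 := hall 2
    simp at h0 h1 h2
    apply hpq
    have hx1 : x = 1 := by linear_combination -h0
    ext
    · rw [hx1] at h1; linear_combination h1
    · rw [hx1] at h2; linear_combination h2

private lemma li2_shift {A B C : Fin 3 → K} (h : LinearIndependent K ![A,B,C]) (t : K) :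
    LinearIndependent K ![A + t • B, C] := by
  have h3 := Fintype.linearIndependent_iff.mp h
  rw [linearIndependent_fin2]
  constructor
  · intro h0
    simp only [Matrix.cons_val_one, Matrix.head_cons] at h0
    have := h3 ![0,0,1] (by rw [Fin.sum_univ_three]; simpa using h0) 2
    simp at this
  · intro x hx
    simp only [Matrix.cons_val_zero, Matrix.cons_val_one, Matrix.head_cons] at hx
    have key : (1:K) • A + t • B + (-x) • C = (A + t • B) - x • C := by module
    rw [← hx, sub_self] at key
    have := h3 ![1, t, -x] (by rw [Fin.sum_univ_three]; simpa using key) 0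
    simp at this

set_option maxHeartbeats 2000000 in
private lemma frame_all {a b c d : Fin 3 → K}
    (h1 : LinearIndependent K ![a,b,c]) (h2 : LinearIndependent K ![a,b,d])
    (h3 : LinearIndependent K ![a,c,d]) (h4 : LinearIndependent K ![b,c,d]) :
    ∀ i j k : Fin 4, i ≠ j → i ≠ k → j ≠ k →
      LinearIndependent K ![![a,b,c,d] i, ![a,b,c,d] j, ![a,b,c,d] k] := by
  have h1a := li_rot h1
  have h1b := li_rot h1a
  have h1c := li_swap h1
  have h1d := li_rot h1c
  have h1e := li_rot h1d
  have h2a := li_rot h2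
  have h2b := li_rot h2a
  have h2c := li_swap h2
  have h2d := li_rot h2c
  have h2e := li_rot h2d
  have h3a := li_rot h3
  have h3b := li_rot h3a
  have h3c := li_swap h3
  have h3d := li_rot h3c
  have h3e := li_rot h3d
  have h4a := li_rot h4
  have h4b := li_rot h4a
  have h4c := li_swap h4
  have h4d := li_rot h4c
  have h4e := li_rot h4d
  intro i j k hij hik hjk
  fin_cases i <;> fin_cases j <;> fin_cases k <;>
    first
      | exact absurd rfl hij
      | exact absurd rfl hik
      | exact absurd rfl hjk
      | (simp only [Matrix.cons_val_zero, Matrix.cons_val_one, Matrix.head_cons,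
          Matrix.cons_val_two, Matrix.tail_cons, Matrix.cons_val_three]; assumption)

private lemma biv_infinite_zeros {K : Type*} [Field K] [IsAlgClosed K]
    (g : K[X][Y]) (hg : ∀ c : K, g ≠ Polynomial.C (Polynomial.C c)) :
    {p : K × K | g.evalEval p.1 p.2 = 0}.Infinite := by
  rcases Nat.eq_zero_or_pos g.natDegree with h0 | hpos
  · have hg' : g = Polynomial.C (g.coeff 0) := g.eq_C_of_natDegree_eq_zero h0
    set h : Polynomial K := g.coeff 0 with hh
    have hdeg : h.degree ≠ 0 := by
      intro hd
      have hc := Polynomial.degree_le_zero_iff.mp (le_of_eq hd)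
      exact hg (h.coeff 0) (by rw [hg']; exact congrArg Polynomial.C hc)
    obtain ⟨x, hx⟩ := IsAlgClosed.exists_root h hdeg
    apply Set.infinite_of_injective_forall_mem
      (f := fun t : K => ((x, t) : K × K))
    · intro a b hab; simpa using congrArg Prod.snd hab
    · intro t
      simp only [Set.mem_setOf_eq]
      rw [hg', Polynomial.evalEval_C]
      exact hx
  · have hlc : g.leadingCoeff ≠ 0 := Polynomial.leadingCoeff_ne_zero.mpr
      (fun h => by simp [h] at hpos)
    have hfin : {x : K | g.leadingCoeff.eval x = 0}.Finite :=
      Polynomial.finite_setOf_isRoot hlc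
    have hinf : {x : K | g.leadingCoeff.eval x ≠ 0}.Infinite := by
      have := hfin.infinite_compl
      simpa [Set.compl_setOf] using this
    have key : ∀ x : K, g.leadingCoeff.eval x ≠ 0 → ∃ y, g.evalEval x y = 0 := by
      intro x hx
      set gx : Polynomial K := g.map (Polynomial.evalRingHom x) with hgx
      have hdeg : gx.natDegree = g.natDegree :=
        Polynomial.natDegree_map_of_leadingCoeff_ne_zero _ hx
      have hd0 : gx.degree ≠ ((0:ℕ):WithBot ℕ) := Polynomial.degree_ne_of_natDegree_ne (by omega)
      have hd : gx.degree ≠ 0 := by simpa using hd0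
      obtain ⟨y, hy⟩ := IsAlgClosed.exists_root gx hd
      exact ⟨y, by rw [← Polynomial.map_evalRingHom_eval]; exact hy⟩
    classical
    haveI := hinf.to_subtype
    apply Set.infinite_of_injective_forall_mem
      (f := fun x : {x : K | g.leadingCoeff.eval x ≠ 0} =>
        ((x.1, if h : ∃ y, g.evalEval x.1 y = 0 then h.choose else 0) : K × K))
    · intro a b hab
      exact Subtype.ext (congrArg Prod.fst hab)
    · rintro ⟨x, hx⟩
      have h := key x hx
      simp only [Set.mem_setOf_eq, dif_pos h]
      exact h.choose_spec

private def chartPoly (F : MvPolynomial (Fin 3) K) (A B C : Fin 3 → K) : K[X][Y] :=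
  MvPolynomial.eval₂ (Polynomial.C.comp Polynomial.C)
    (fun i => Polynomial.CC (A i) + Polynomial.C Polynomial.X * Polynomial.CC (B i)
      + Polynomial.X * Polynomial.CC (C i)) F

private lemma chartPoly_eval (F : MvPolynomial (Fin 3) K) (A B C : Fin 3 → K) (s t : K) :
    (chartPoly F A B C).evalEval s t = eval (A + s • B + t • C) F := by
  have h : (Polynomial.evalEvalRingHom s t).comp
      (MvPolynomial.eval₂Hom (Polynomial.C.comp Polynomial.C)
        (fun i => Polynomial.CC (A i) + Polynomial.C Polynomial.X * Polynomial.CC (B i)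
          + Polynomial.X * Polynomial.CC (C i)))
      = MvPolynomial.eval (A + s • B + t • C) := by
    apply MvPolynomial.ringHom_ext
    · intro r; simp
    · intro i; simp [Polynomial.evalEval]; ring
  exact DFunLike.congr_fun h F

private lemma eval_smul_homog {d : ℕ} {F : MvPolynomial (Fin 3) K}
    (hhom : F.IsHomogeneous d) (c : K) (v : Fin 3 → K) :
    eval (c • v) F = c ^ d * eval v F := by
  rw [eval_eq', eval_eq', Finset.mul_sum]
  refine Finset.sum_congr rfl fun m hm => ?_
  have hdeg : (∑ i, m i) = d := by
    have h := hhom (MvPolynomial.mem_support_iff.mp hm)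
    rw [Finsupp.weight_apply] at h
    rw [← h]
    rw [Finsupp.sum_fintype]
    · simp
    · intro i; simp
  have h1 : ∀ i ∈ Finset.univ, (c • v) i ^ m i = c ^ m i * v i ^ m i :=
    fun i _ => by simp [mul_pow]
  rw [Finset.prod_congr rfl h1, Finset.prod_mul_distrib, Finset.prod_pow_eq_pow_sum, hdeg]
  ring

private lemma chart_infinite [IsAlgClosed K] {d : ℕ} {F : MvPolynomial (Fin 3) K}
    (hF : F ≠ 0) (hhom : F.IsHomogeneous d) {A B C : Fin 3 → K}
    (hABC : LinearIndependent K ![A,B,C])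
    (hv : ∃ v, eval v F = 0 ∧ det3 B C v ≠ 0) :
    {p : K × K | eval (A + p.1 • B + p.2 • C) F = 0}.Infinite := by
  have hsetEq : {p : K × K | (chartPoly F A B C).evalEval p.1 p.2 = 0}
      = {p : K × K | eval (A + p.1 • B + p.2 • C) F = 0} := by
    ext p; simp [chartPoly_eval]
  rw [← hsetEq]
  apply biv_infinite_zeros
  intro c hc
  have hcard : Fintype.card (Fin 3) = Module.finrank K (Fin 3 → K) := by
    simp [Module.finrank_fin_fun]
  let Bas : Module.Basis (Fin 3) K (Fin 3 → K) := basisOfLinearIndependentOfCardEqFinrank hABC hcard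
  have hBas : ⇑Bas = ![A,B,C] := coe_basisOfLinearIndependentOfCardEqFinrank hABC hcard
  have decomp : ∀ w : Fin 3 → K,
      w = (Bas.repr w 0) • A + (Bas.repr w 1) • B + (Bas.repr w 2) • C := by
    intro w
    have h := Bas.sum_repr w
    rw [Fin.sum_univ_three, hBas] at h
    simpa using h.symm
  have hdetw : ∀ (w : Fin 3 → K) (x y z : K), w = x•A + y•B + z•C →
      det3 B C w = x * det3 B C A := by
    intro w x y z hw
    subst hw
    rw [det3_expand, det3_expand]
    simp only [Pi.add_apply, Pi.smul_apply, smul_eq_mul]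
    ring
  have hdetA : det3 B C A ≠ 0 := by
    have h := (li_iff_det A B C).mp hABC
    intro h0; apply h
    rw [det3_expand] at h0 ⊢; linear_combination h0
  have evalchart_zero_of : ∀ w : Fin 3 → K, det3 B C w ≠ 0 →
      eval ((1/(Bas.repr w 0)) • w) F = (1/(Bas.repr w 0))^d * eval w F ∧
      (1/(Bas.repr w 0)) • w = A + ((Bas.repr w 1)/(Bas.repr w 0)) • B
        + ((Bas.repr w 2)/(Bas.repr w 0)) • C ∧ Bas.repr w 0 ≠ 0 := by
    intro w hw
    have hx : Bas.repr w 0 ≠ 0 := fun hz => hw (by rw [hdetw w _ _ _ (decomp w), hz, zero_mul])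
    refine ⟨eval_smul_homog hhom _ _, ?_, hx⟩
    have hid : ∀ (u a b c' : Fin 3 → K) (x y z : K), x ≠ 0 → u = x•a+y•b+z•c' →
        (1/x) • u = a + (y/x)•b + (z/x)•c' := by
      intro u a b c' x y z hxne hu
      subst hu
      rw [smul_add, smul_add, smul_smul, smul_smul, smul_smul,
        show (1/x)*x = 1 by field_simp, show (1/x)*y = y/x by ring,
        show (1/x)*z = z/x by ring, one_smul]
    exact hid w A B C _ _ _ hx (decomp w)
  obtain ⟨v, hvF, hvdet⟩ := hv
  obtain ⟨hv1, hv2, hv3⟩ := evalchart_zero_of v hvdet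
  have hc0 : c = 0 := by
    have h1 : (chartPoly F A B C).evalEval (Bas.repr v 1 / Bas.repr v 0)
        (Bas.repr v 2 / Bas.repr v 0) = 0 := by
      rw [chartPoly_eval, ← hv2, hv1, hvF, mul_zero]
    rw [hc] at h1
    simpa using h1
  rw [hc0] at hc
  have hallzero : ∀ s t : K, eval (A + s•B + t•C) F = 0 := by
    intro s t
    have h := chartPoly_eval F A B C s t
    rw [hc] at h
    simpa using h.symm
  have hcne : crossVec B C ≠ (0 : Fin 3 → K) := by
    intro h0
    apply hdetA
    rw [← dot_cross, h0]
    simp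
  have hlzero : F * lform (crossVec B C) = 0 := by
    apply MvPolynomial.funext
    intro w
    rw [map_mul, map_zero]
    rcases eq_or_ne (det3 B C w) 0 with h0 | h0
    · rw [eval_lform, dot_cross, h0, mul_zero]
    · obtain ⟨hw1, hw2, hw3⟩ := evalchart_zero_of w h0
      have hz : eval w F = 0 := by
        have h2 : eval ((1/(Bas.repr w 0)) • w) F = 0 := by
          rw [hw2]; exact hallzero _ _
        rw [hw1] at h2
        have hne : (1/(Bas.repr w 0))^d ≠ 0 := pow_ne_zero _ (by simp [hw3])
        exact (mul_eq_zero.mp h2).resolve_left hne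
      rw [hz, zero_mul]
  rcases mul_eq_zero.mp hlzero with h | h
  · exact hF h
  · exact lform_ne_zero hcne h

private lemma line_zero_of_infinite {F : MvPolynomial (Fin 3) K} (A B : Fin 3 → K)
    (h : {s : K | eval (A + s • B) F = 0}.Infinite) : ∀ s : K, eval (A + s • B) F = 0 := by
  set q : Polynomial K := Polynomial.eval (Polynomial.C 0) (chartPoly F A B 0) with hq
  have hqe : ∀ s : K, q.eval s = eval (A + s • B) F := by
    intro s
    have h1 : (chartPoly F A B 0).evalEval s 0 = eval (A + s • B + (0:K) • (0 : Fin 3 → K)) F :=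
      chartPoly_eval F A B 0 s 0
    rw [smul_zero, add_zero] at h1
    exact h1
  have hinf : {s : K | q.IsRoot s}.Infinite := by
    apply Set.Infinite.mono _ h
    intro s hs
    simp only [Set.mem_setOf_eq] at hs ⊢
    rw [Polynomial.IsRoot, hqe]
    exact hs
  have hq0 : q = 0 := Polynomial.eq_zero_of_infinite_isRoot q hinf
  intro s
  rw [← hqe, hq0]
  simp

private lemma twoline [IsAlgClosed K] {d : ℕ} {F : MvPolynomial (Fin 3) K} (hF : F ≠ 0)
    (hhom : F.IsHomogeneous d)
    (hnl : ∀ a b : Fin 3 → K, LinearIndependent K ![a,b] →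
      ∃ v, eval v F = 0 ∧ det3 a b v ≠ 0)
    {D0 E : Fin 3 → K} (hDE : LinearIndependent K ![D0, E])
    (h1 : ∀ t : K, eval (D0 + t • E) F = 0) (h2 : eval E F = 0) :
    ∃ P : Fin 4 → (Fin 3 → K),
      (∀ i, P i ≠ 0) ∧ (∀ i, eval (P i) F = 0) ∧
      (∀ i j k : Fin 4, i ≠ j → i ≠ k → j ≠ k →
        LinearIndependent K ![P i, P j, P k]) := by
  obtain ⟨A'', hA''⟩ := exists_extend hDE
  have Sinf := chart_infinite hF hhom hA'' (hnl D0 E hDE)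
  obtain ⟨p, hp, q, hq, hpq⟩ := Sinf.nontrivial
  simp only [Set.mem_setOf_eq] at hp hq
  have hdA : det3 A'' D0 E ≠ 0 := (li_iff_det _ _ _).mp hA''
  have hdQ : det3 D0 E (A'' + p.1 • D0 + p.2 • E) ≠ 0 := by
    rw [det3_chart]; exact hdA
  have hdD : det3 D0 E (A'' + q.1 • D0 + q.2 • E) ≠ 0 := by
    rw [det3_chart]; exact hdA
  set Qh := A'' + p.1 • D0 + p.2 • E with hQh
  set Dh := A'' + q.1 • D0 + q.2 • E with hDh
  have hQD : LinearIndependent K ![Qh, Dh] := li_pair_chart hA'' hpq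
  have hc : ¬(det3 Qh Dh D0 = 0 ∧ det3 Qh Dh E = 0) := by
    rintro ⟨hc0, hc1⟩
    obtain ⟨x1, y1, hD0⟩ := Submodule.mem_span_pair.mp (mem_span_of_det3 hQD hc0)
    obtain ⟨x2, y2, hE⟩ := Submodule.mem_span_pair.mp (mem_span_of_det3 hQD hc1)
    apply hdQ
    rw [← hD0, ← hE]
    exact det3_combo Qh Dh x1 y1 x2 y2
  have hlin : ∀ t : K, det3 Qh Dh (D0 + t • E) = det3 Qh Dh D0 + t * det3 Qh Dh E :=
    fun t => det3_lin1 Qh Dh D0 E t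
  have hsub : {t : K | det3 Qh Dh (D0 + t • E) = 0}.Subsingleton := by
    intro ta hta tb htb
    simp only [Set.mem_setOf_eq, hlin] at hta htb
    by_contra hne
    apply hc
    have hc1 : det3 Qh Dh E = 0 := by
      have h' : (ta - tb) * det3 Qh Dh E = 0 := by linear_combination hta - htb
      exact (mul_eq_zero.mp h').resolve_left (sub_ne_zero.mpr hne)
    exact ⟨by linear_combination hta - ta * hc1, hc1⟩
  have hgoodinf : {t : K | det3 Qh Dh (D0 + t • E) ≠ 0}.Infinite := by
    have hfin : {t : K | det3 Qh Dh (D0 + t • E) = 0}.Finite := hsub.finite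
    have := hfin.infinite_compl
    simpa [Set.compl_setOf] using this
  obtain ⟨ta, hta, tb, htb, htab⟩ := hgoodinf.nontrivial
  simp only [Set.mem_setOf_eq] at hta htb
  have d1 : det3 (D0 + ta • E) (D0 + tb • E) Qh ≠ 0 := by
    rw [det3_twoline]
    exact mul_ne_zero (sub_ne_zero.mpr (Ne.symm htab)) hdQ
  have d2 : det3 (D0 + ta • E) (D0 + tb • E) Dh ≠ 0 := by
    rw [det3_twoline]
    exact mul_ne_zero (sub_ne_zero.mpr (Ne.symm htab)) hdD
  have d3 : det3 (D0 + ta • E) Qh Dh ≠ 0 := by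
    rw [show det3 (D0 + ta • E) Qh Dh = det3 Qh Dh (D0 + ta • E) from
      (det3_cyc Qh Dh (D0 + ta • E)).symm]
    exact hta
  have d4 : det3 (D0 + tb • E) Qh Dh ≠ 0 := by
    rw [show det3 (D0 + tb • E) Qh Dh = det3 Qh Dh (D0 + tb • E) from
      (det3_cyc Qh Dh (D0 + tb • E)).symm]
    exact htb
  refine ⟨![D0 + ta • E, D0 + tb • E, Qh, Dh], ?_, ?_,
    frame_all ((li_iff_det _ _ _).mpr d1) ((li_iff_det _ _ _).mpr d2)
      ((li_iff_det _ _ _).mpr d3) ((li_iff_det _ _ _).mpr d4)⟩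
  · intro i
    fin_cases i
    · show D0 + ta • E ≠ 0
      exact ne_zero_of_det3 d1
    · show D0 + tb • E ≠ 0
      exact ne_zero_of_det3 d4
    · show Qh ≠ 0
      exact ne_zero_of_det3 hta
    · show Dh ≠ 0
      have hdh : det3 Dh (D0 + ta • E) Qh ≠ 0 := by
        rw [show det3 Dh (D0 + ta • E) Qh = det3 (D0 + ta • E) Qh Dh from
          (det3_cyc (D0 + ta • E) Qh Dh).symm]
        exact d3
      exact ne_zero_of_det3 hdh
  · intro i
    fin_cases i
    · show MvPolynomial.eval (D0 + ta • E) F = 0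
      exact h1 ta
    · show MvPolynomial.eval (D0 + tb • E) F = 0
      exact h1 tb
    · show MvPolynomial.eval Qh F = 0
      exact hp
    · show MvPolynomial.eval Dh F = 0
      exact hq

end CurveFrameAux

theorem curve_not_a_line_contains_frame
    {K : Type*} [Field K] [IsAlgClosed K]
    (d : ℕ) (hd : 1 ≤ d)
    (F : MvPolynomial (Fin 3) K) (hhom : F.IsHomogeneous d)
    (hnotline : ¬ ∃ L : MvPolynomial (Fin 3) K, L ≠ 0 ∧ L.IsHomogeneous 1 ∧
      ∀ v : Fin 3 → K, v ≠ 0 → eval v F = 0 → eval v L = 0) :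
    ∃ P : Fin 4 → (Fin 3 → K),
      (∀ i, P i ≠ 0) ∧
      (∀ i, eval (P i) F = 0) ∧
      (∀ i j k : Fin 4, i ≠ j → i ≠ k → j ≠ k →
        LinearIndependent K ![P i, P j, P k]) := by
  classical
  by_cases hF0 : F = 0
  · refine ⟨![![1,0,0],![0,1,0],![0,0,1],![1,1,1]], ?_, ?_, ?_⟩
    · intro i
      fin_cases i <;> intro h <;>
        first
          | exact one_ne_zero (α := K) (by simpa using congrFun h 0)
          | exact one_ne_zero (α := K) (by simpa using congrFun h 1)
          | exact one_ne_zero (α := K) (by simpa using congrFun h 2)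
    · intro i; rw [hF0]; simp
    · apply frame_all <;> rw [li_iff_det, det3_expand] <;> norm_num [Matrix.cons_val_two]
  · have hnl : ∀ a b : Fin 3 → K, LinearIndependent K ![a,b] →
        ∃ v, eval v F = 0 ∧ det3 a b v ≠ 0 := by
      intro a b hab
      by_contra h; push_neg at h
      exact hnotline ⟨lform (crossVec a b), lform_ne_zero (crossVec_ne_zero hab),
        lform_homog _, fun v hv0 hvF => by rw [eval_lform, dot_cross]; exact h v hvF⟩
    have hE12 : LinearIndependent K ![(![1,0,0] : Fin 3 → K), ![0,1,0]] := by
      rw [linearIndependent_fin2]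
      constructor
      · intro h; exact one_ne_zero (α := K) (by simpa using congrFun h 1)
      · intro a h
        have := congrFun h 0
        simp at this
    have hE312 : LinearIndependent K ![(![0,0,1] : Fin 3 → K), ![1,0,0], ![0,1,0]] := by
      rw [li_iff_det, det3_expand]; norm_num [Matrix.cons_val_two]
    have S1inf := chart_infinite hF0 hhom hE312 (hnl _ _ hE12)
    obtain ⟨p1, hp1, p2, hp2, hp12⟩ := S1inf.nontrivial
    simp only [Set.mem_setOf_eq] at hp1 hp2
    set P1 : Fin 3 → K := ![0,0,1] + p1.1 • ![1,0,0] + p1.2 • ![0,1,0] with hP1def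
    set P2 : Fin 3 → K := ![0,0,1] + p2.1 • ![1,0,0] + p2.2 • ![0,1,0] with hP2def
    have hP12 : LinearIndependent K ![P1, P2] := li_pair_chart hE312 hp12
    obtain ⟨A2, hA2⟩ := exists_extend hP12
    have S2inf := chart_infinite hF0 hhom hA2 (hnl _ _ hP12)
    obtain ⟨p3, hp3⟩ := S2inf.nonempty
    simp only [Set.mem_setOf_eq] at hp3
    set P3 : Fin 3 → K := A2 + p3.1 • P1 + p3.2 • P2 with hP3def
    have hdetA2 : det3 A2 P1 P2 ≠ 0 := (li_iff_det _ _ _).mp hA2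
    have h123 : det3 P1 P2 P3 ≠ 0 := by
      rw [hP3def, det3_chart]
      exact hdetA2
    have c13ne : det3 P1 P3 P2 ≠ 0 := by
      intro h0; apply h123
      rw [det3_expand] at h0 ⊢; linear_combination -h0
    have c23ne : det3 P2 P3 P1 ≠ 0 := by
      intro h0; apply h123
      rw [det3_expand] at h0 ⊢; linear_combination h0
    set t0 : K := -det3 P1 P3 A2 / det3 P1 P3 P2 with ht0
    set s0 : K := -det3 P2 P3 A2 / det3 P2 P3 P1 with hs0
    by_cases hfind : ∃ p : K × K,
        eval (A2 + p.1 • P1 + p.2 • P2) F = 0 ∧ p.1 ≠ s0 ∧ p.2 ≠ t0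
    · obtain ⟨p4, hp4, hp4s, hp4t⟩ := hfind
      set P4 : Fin 3 → K := A2 + p4.1 • P1 + p4.2 • P2 with hP4def
      have h124 : det3 P1 P2 P4 ≠ 0 := by rw [hP4def, det3_chart]; exact hdetA2
      have h134 : det3 P1 P3 P4 ≠ 0 := by
        rw [hP4def, det3_lin2, det3_self, mul_zero, add_zero]
        intro h0
        apply hp4t
        rw [ht0, eq_div_iff c13ne]
        linear_combination h0
      have h234 : det3 P2 P3 P4 ≠ 0 := by
        rw [hP4def, det3_lin2, det3_self, mul_zero, add_zero]
        intro h0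
        apply hp4s
        rw [hs0, eq_div_iff c23ne]
        linear_combination h0
      refine ⟨![P1, P2, P3, P4], ?_, ?_,
        frame_all ((li_iff_det _ _ _).mpr h123) ((li_iff_det _ _ _).mpr h124)
          ((li_iff_det _ _ _).mpr h134) ((li_iff_det _ _ _).mpr h234)⟩
      · intro i
        fin_cases i
        · show P1 ≠ 0
          exact ne_zero_of_det3 h123
        · show P2 ≠ 0
          exact ne_zero_of_det3 h234
        · show P3 ≠ 0
          have h3' : det3 P3 P1 P2 ≠ 0 := by
            rw [show det3 P3 P1 P2 = det3 P1 P2 P3 from (det3_cyc P1 P2 P3).symm]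
            exact h123
          exact ne_zero_of_det3 h3'
        · show P4 ≠ 0
          have h4' : det3 P4 P1 P3 ≠ 0 := by
            rw [show det3 P4 P1 P3 = det3 P1 P3 P4 from (det3_cyc P1 P3 P4).symm]
            exact h134
          exact ne_zero_of_det3 h4'
      · intro i
        fin_cases i
        · show MvPolynomial.eval P1 F = 0
          exact hp1
        · show MvPolynomial.eval P2 F = 0
          exact hp2
        · show MvPolynomial.eval P3 F = 0
          exact hp3
        · show MvPolynomial.eval P4 F = 0
          exact hp4
    · push_neg at hfind
      have hone : ({p : K × K | eval (A2 + p.1 • P1 + p.2 • P2) F = 0}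
              ∩ {p : K × K | p.1 = s0}).Infinite ∨
          ({p : K × K | eval (A2 + p.1 • P1 + p.2 • P2) F = 0}
              ∩ {p : K × K | p.2 = t0}).Infinite := by
        by_contra hno
        push_neg at hno
        apply S2inf
        apply Set.Finite.subset (hno.1.union hno.2)
        intro p hp
        rcases eq_or_ne p.1 s0 with h | h
        · exact Or.inl ⟨hp, h⟩
        · exact Or.inr ⟨hp, hfind p hp h⟩
      rcases hone with hcase | hcase
      · have hinj : Set.InjOn Prod.snd ({p : K × K | eval (A2 + p.1 • P1 + p.2 • P2) F = 0}
            ∩ {p : K × K | p.1 = s0}) := by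
          rintro x ⟨hx, hx1⟩ y ⟨hy, hy1⟩ hxy
          exact Prod.ext (hx1.trans hy1.symm) hxy
        have himg : {t : K | eval ((A2 + s0 • P1) + t • P2) F = 0}.Infinite := by
          apply Set.Infinite.mono _ (hcase.image hinj)
          rintro t ⟨x, ⟨hx, hx1⟩, rfl⟩
          simp only [Set.mem_setOf_eq] at hx ⊢
          rw [← hx1]
          exact hx
        have hline := line_zero_of_infinite (A2 + s0 • P1) P2 himg
        exact twoline hF0 hhom hnl (li2_shift hA2 s0) hline hp2
      · have hinj : Set.InjOn Prod.fst ({p : K × K | eval (A2 + p.1 • P1 + p.2 • P2) F = 0}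
            ∩ {p : K × K | p.2 = t0}) := by
          rintro x ⟨hx, hx1⟩ y ⟨hy, hy1⟩ hxy
          exact Prod.ext hxy (hx1.trans hy1.symm)
        have himg : {s : K | eval ((A2 + t0 • P2) + s • P1) F = 0}.Infinite := by
          apply Set.Infinite.mono _ (hcase.image hinj)
          rintro t ⟨x, ⟨hx, hx1⟩, rfl⟩
          simp only [Set.mem_setOf_eq] at hx ⊢
          rw [add_right_comm, ← hx1]
          exact hx
        have hline := line_zero_of_infinite (A2 + t0 • P2) P1 himg
        have hA2' : LinearIndependent K ![A2, P2, P1] :=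
          li_rot (li_rot (li_swap (li_rot hA2)))
        exact twoline hF0 hhom hnl (li2_shift hA2' t0) hline hp1
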